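/- Let 𝔛 be a complete class of finite groups, G a finite group and N a normal subgroup of G such that k_𝔛(G) = k_𝔛(G/N). Then: (1) for every 𝔛-maximal subgroup H of G, the image HN/N is an 𝔛-maximal subgroup of G/N; (2) every 𝔛-maximal subgroup of G/N is of the form HN/N for some 𝔛-maximal subgroup H of G; and (3) two 𝔛-maximal subgroups H and L of G are conjugate in G if and only if HN/N and LN/N are conjugate in G/N, so the map H ↦ HN/N induces a bijection between the conjugacy classes of 𝔛-maximal subgroups of G and those of G/N. -/

import Mathlib

open scoped Pointwise

/-- A class of (finite) groups, given as a property of group types. -/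
abbrev GroupClass : Type 1 := ∀ (G : Type) [Group G], Prop

/-- A complete class of finite groups: nonempty, closed under isomorphism,
subgroups, homomorphic images, and extensions. -/
def IsCompleteClass (X : GroupClass) : Prop :=
  (∃ (G : Type) (inst : Group G), Finite G ∧ @X G inst) ∧
  (∀ (G H : Type) [Group G] [Group H] [Finite G], (G ≃* H) → X G → X H) ∧
  (∀ (G : Type) [Group G] [Finite G], X G → ∀ H : Subgroup G, X ↥H) ∧
  (∀ (G H : Type) [Group G] [Group H] [Finite G] (φ : G →* H),
      Function.Surjective φ → X G → X H) ∧
  (∀ (G : Type) [Group G] [Finite G] (N : Subgroup G) [N.Normal],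
      X ↥N → X (G ⧸ N) → X G)

/-- The conjugate `g H g⁻¹` of a subgroup. -/
def conjSub {G : Type} [Group G] (g : G) (H : Subgroup G) : Subgroup G :=
  H.map (MulAut.conj g).toMonoidHom

/-- The number of conjugacy classes meeting a (conjugation-invariant) set of subgroups. -/
noncomputable def numClasses {G : Type} [Group G] (S : Set (Subgroup G)) : ℕ :=
  Nat.card {C : Set (Subgroup G) // ∃ H ∈ S, C = {K | ∃ g : G, K = conjSub g H}}

/-- An `𝔛`-maximal subgroup: an `𝔛`-subgroup maximal under inclusion among
`𝔛`-subgroups. -/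
def IsXMaximal (X : GroupClass) {G : Type} [Group G] (H : Subgroup G) : Prop :=
  X ↥H ∧ ∀ K : Subgroup G, X ↥K → H ≤ K → H = K

/-- `k_𝔛(G)`: the number of conjugacy classes of `𝔛`-maximal subgroups of `G`. -/
noncomputable def kX (X : GroupClass) (G : Type) [Group G] : ℕ :=
  numClasses {H : Subgroup G | IsXMaximal X H}

/-! ### Auxiliary lemmas -/

section Aux

variable {X : GroupClass}

lemma xIso (hXc : IsCompleteClass X) {A B : Type} [Group A] [Group B] [Finite A]
    (e : A ≃* B) (hA : X A) : X B := hXc.2.1 A B e hA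

lemma xSub (hXc : IsCompleteClass X) {A : Type} [Group A] [Finite A] (hA : X A)
    (H : Subgroup A) : X ↥H := hXc.2.2.1 A hA H

lemma xHom (hXc : IsCompleteClass X) {A B : Type} [Group A] [Group B] [Finite A]
    (φ : A →* B) (hs : Function.Surjective φ) (hA : X A) : X B :=
  hXc.2.2.2.1 A B φ hs hA

lemma xExt (hXc : IsCompleteClass X) {A : Type} [Group A] [Finite A] (N : Subgroup A)
    [N.Normal] (h1 : X ↥N) (h2 : X (A ⧸ N)) : X A := hXc.2.2.2.2 A N h1 h2

lemma xMap (hXc : IsCompleteClass X) {A B : Type} [Group A] [Group B] [Finite A]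
    (f : A →* B) (H : Subgroup A) (hH : X ↥H) : X ↥(H.map f) :=
  xHom hXc (f.subgroupMap H) (f.subgroupMap_surjective H) hH

lemma xTriv (hXc : IsCompleteClass X) {A : Type} [Group A] [Subsingleton A] : X A := by
  obtain ⟨G₀, _, hfin, hG₀⟩ := hXc.1
  haveI := hfin
  haveI : Unique ↥(⊥ : Subgroup G₀) := ⟨⟨1⟩, fun a => Subtype.ext ((Subgroup.mem_bot).mp a.2)⟩
  haveI : Unique A := ⟨⟨1⟩, fun a => Subsingleton.elim a 1⟩
  exact xIso hXc (MulEquiv.ofUnique (M := ↥(⊥ : Subgroup G₀)) (N := A))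
    (xSub hXc hG₀ ⊥)

/-! ### conjSub lemmas -/

lemma mem_conjSub {G : Type} [Group G] {g x : G} {H : Subgroup G} :
    x ∈ conjSub g H ↔ ∃ h ∈ H, g * h * g⁻¹ = x := by
  simp [conjSub, Subgroup.mem_map, MulAut.conj_apply]

lemma conjSub_conjSub {G : Type} [Group G] (a b : G) (H : Subgroup G) :
    conjSub a (conjSub b H) = conjSub (a * b) H := by
  ext x
  simp only [mem_conjSub]
  constructor
  · rintro ⟨y, ⟨h, hh, rfl⟩, rfl⟩
    exact ⟨h, hh, by group⟩
  · rintro ⟨h, hh, rfl⟩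
    exact ⟨b * h * b⁻¹, ⟨h, hh, rfl⟩, by group⟩

lemma conjSub_one {G : Type} [Group G] (H : Subgroup G) : conjSub 1 H = H := by
  ext x
  simp only [mem_conjSub]
  constructor
  · rintro ⟨h, hh, rfl⟩; simpa using hh
  · intro hx; exact ⟨x, hx, by group⟩

lemma conjSub_mono {G : Type} [Group G] (g : G) {H K : Subgroup G} (h : H ≤ K) :
    conjSub g H ≤ conjSub g K := Subgroup.map_mono h

lemma conjSub_cancel {G : Type} [Group G] (g : G) (H : Subgroup G) :
    conjSub g⁻¹ (conjSub g H) = H := by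
  rw [conjSub_conjSub, inv_mul_cancel, conjSub_one]

noncomputable def conjSubEquiv {G : Type} [Group G] (g : G) (H : Subgroup G) :
    ↥H ≃* ↥(conjSub g H) :=
  Subgroup.equivMapOfInjective H (MulAut.conj g).toMonoidHom
    (fun _ _ hab => (MulAut.conj g).injective hab)

lemma conjSub_map {G G' : Type} [Group G] [Group G'] (f : G →* G') (g : G)
    (H : Subgroup G) : (conjSub g H).map f = conjSub (f g) (H.map f) := by
  ext x
  simp only [mem_conjSub, Subgroup.mem_map]
  constructor
  · rintro ⟨y, ⟨h, hh, rfl⟩, rfl⟩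
    exact ⟨f h, ⟨h, hh, rfl⟩, by simp [map_mul]⟩
  · rintro ⟨y, ⟨h, hh, rfl⟩, rfl⟩
    exact ⟨g * h * g⁻¹, ⟨h, hh, rfl⟩, by simp [map_mul]⟩

lemma xmax_conj (hXc : IsCompleteClass X) {G : Type} [Group G] [Finite G] (g : G)
    {H : Subgroup G} (h : IsXMaximal X H) : IsXMaximal X (conjSub g H) := by
  refine ⟨xIso hXc (conjSubEquiv g H) h.1, fun K hK hle => ?_⟩
  have h2 : H ≤ conjSub g⁻¹ K := by
    have := conjSub_mono g⁻¹ hle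
    rwa [conjSub_cancel] at this
  have h3 : X ↥(conjSub g⁻¹ K) := xIso hXc (conjSubEquiv g⁻¹ K) hK
  have h4 := h.2 _ h3 h2
  rw [h4, conjSub_conjSub, mul_inv_cancel, conjSub_one]

/-! ### orbits -/

def orbitS {G : Type} [Group G] (H : Subgroup G) : Set (Subgroup G) :=
  {K | ∃ g : G, K = conjSub g H}

lemma mem_orbitS_self {G : Type} [Group G] (H : Subgroup G) : H ∈ orbitS H :=
  ⟨1, (conjSub_one H).symm⟩

lemma orbitS_conj {G : Type} [Group G] (g : G) (H : Subgroup G) :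
    orbitS (conjSub g H) = orbitS H := by
  ext K
  constructor
  · rintro ⟨a, rfl⟩
    exact ⟨a * g, by rw [conjSub_conjSub]⟩
  · rintro ⟨a, rfl⟩
    exact ⟨a * g⁻¹, by rw [conjSub_conjSub, inv_mul_cancel_right]⟩

/-! ### p-groups lie in X if X has an element of order p -/

lemma xPGroup (hXc : IsCompleteClass X) {p : ℕ} (hp : p.Prime) {B : Type} [Group B]
    [Finite B] (hB : X B) (hpB : p ∣ Nat.card B) (P : Type) [Group P] [Finite P]
    (hP : IsPGroup p P) : X P := by
  haveI : Fact p.Prime := ⟨hp⟩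
  obtain ⟨b, hb⟩ : ∃ b : B, orderOf b = p := by
    haveI := Fintype.ofFinite B
    exact exists_prime_orderOf_dvd_card p (by rwa [Fintype.card_eq_nat_card])
  have hXb : X ↥(Subgroup.zpowers b) := xSub hXc hB _
  have hcb : Nat.card ↥(Subgroup.zpowers b) = p := by rw [Nat.card_zpowers, hb]
  haveI : IsCyclic ↥(Subgroup.zpowers b) := isCyclic_of_prime_card hcb
  suffices hmain : ∀ (n : ℕ) (P : Type) [Group P] [Finite P], Nat.card P = n →
      IsPGroup p P → X P from hmain _ P rfl hP
  intro n
  induction n using Nat.strong_induction_on with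
  | _ n ih =>
  intro P _ _ hcard hP
  rcases subsingleton_or_nontrivial P with hs | hnt
  · exact xTriv hXc
  · haveI := hP.center_nontrivial
    obtain ⟨k, hk⟩ := IsPGroup.iff_card.mp (hP.to_subgroup (Subgroup.center P))
    have hne1 : Nat.card ↥(Subgroup.center P) ≠ 1 := (Finite.one_lt_card).ne'
    have hk0 : k ≠ 0 := by rintro rfl; simp [hk] at hne1
    have hpz : p ∣ Nat.card ↥(Subgroup.center P) := by
      rw [hk]; exact dvd_pow_self p hk0
    obtain ⟨ζ, hζ⟩ : ∃ ζ : ↥(Subgroup.center P), orderOf ζ = p := by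
      haveI := Fintype.ofFinite ↥(Subgroup.center P)
      exact exists_prime_orderOf_dvd_card p (by rwa [Fintype.card_eq_nat_card])
    have hz : orderOf (ζ : P) = p := by rw [Subgroup.orderOf_coe, hζ]
    have hzc : (ζ : P) ∈ Subgroup.center P := ζ.2
    set Z := Subgroup.zpowers (ζ : P) with hZ
    haveI : Z.Normal := by
      constructor
      intro m hm g
      rw [hZ, Subgroup.mem_zpowers_iff] at hm
      obtain ⟨j, rfl⟩ := hm
      have hc : Commute g (ζ : P) := Subgroup.mem_center_iff.mp hzc g
      have hcj : Commute g ((ζ : P) ^ j) := hc.zpow_right j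
      have he : g * (ζ : P) ^ j * g⁻¹ = (ζ : P) ^ j := by
        rw [hcj.eq, mul_assoc]; simp
      rw [he, hZ]
      exact Subgroup.mem_zpowers_iff.mpr ⟨j, rfl⟩
    have hcZ : Nat.card ↥Z = p := by rw [hZ, Nat.card_zpowers, hz]
    haveI : IsCyclic ↥Z := isCyclic_of_prime_card hcZ
    have hXZ : X ↥Z := xIso hXc (mulEquivOfCyclicCardEq (hcb.trans hcZ.symm)) hXb
    have hQlt : Nat.card (P ⧸ Z) < n := by
      rw [← hcard, Subgroup.card_eq_card_quotient_mul_card_subgroup Z]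
      have h1 : 1 < Nat.card ↥Z := by rw [hcZ]; exact hp.one_lt
      have h2 : 0 < Nat.card (P ⧸ Z) := Nat.card_pos
      exact (Nat.lt_mul_iff_one_lt_right h2).mpr h1
    exact xExt hXc Z hXZ (ih _ hQlt (P ⧸ Z) rfl (hP.to_quotient Z))

end Aux

section Supp

variable {X : GroupClass}

lemma xSupp (hXc : IsCompleteClass X) : ∀ (n : ℕ) (G : Type) [Group G] [Finite G],
    Nat.card G = n → ∀ (N : Subgroup G) [N.Normal], X (G ⧸ N) →
    ∃ U : Subgroup G, X ↥U ∧ U ⊔ N = ⊤ := by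
  intro n
  induction n using Nat.strong_induction_on with
  | _ n ih =>
  intro G _ _ hn N _ hXQ
  by_cases hA : ∃ M : Subgroup G, M ≠ ⊤ ∧ M ⊔ N = ⊤
  · -- Case a : a proper supplement exists
    obtain ⟨M, hMne, hMN⟩ := hA
    set φ := (QuotientGroup.mk' N).comp M.subtype with hφ
    have hs : Function.Surjective φ := by
      intro q
      obtain ⟨g, rfl⟩ := QuotientGroup.mk'_surjective N q
      have hg : g ∈ (↑(M ⊔ N) : Set G) := by rw [hMN]; trivial
      rw [Subgroup.mul_normal] at hg
      obtain ⟨m, hm, nn, hnn, rfl⟩ := hg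
      refine ⟨⟨m, hm⟩, ?_⟩
      show (QuotientGroup.mk' N) m = (QuotientGroup.mk' N) (m * nn)
      exact (QuotientGroup.mk'_eq_mk' N).mpr ⟨nn, hnn, rfl⟩
    have hXM : X (↥M ⧸ φ.ker) :=
      xIso hXc (QuotientGroup.quotientKerEquivOfSurjective φ hs).symm hXQ
    have hcM : Nat.card ↥M < n := by
      rw [← hn]
      have hle : Nat.card ↥M ≤ Nat.card G :=
        Nat.card_le_card_of_injective _ M.subtype_injective
      rcases lt_or_eq_of_le hle with h | h
      · exact h
      · exact absurd (M.eq_top_of_card_eq h) hMne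
    obtain ⟨U', hU'X, hU'⟩ := ih _ hcM ↥M rfl φ.ker hXM
    refine ⟨U'.map M.subtype,
      xIso hXc (Subgroup.equivMapOfInjective U' M.subtype M.subtype_injective) hU'X, ?_⟩
    have hkmap : φ.ker.map φ = ⊥ := by
      rw [eq_bot_iff]
      rintro x ⟨y, hy, rfl⟩
      simpa [Subgroup.mem_bot] using hy
    have hmap : (U'.map M.subtype).map (QuotientGroup.mk' N) = ⊤ := by
      rw [Subgroup.map_map]
      have h1 : (U' ⊔ φ.ker).map φ = ⊤ := by
        rw [hU', ← MonoidHom.range_eq_map, MonoidHom.range_eq_top.mpr hs]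
      rw [Subgroup.map_sup, hkmap, sup_bot_eq] at h1
      exact h1
    have h2 := Subgroup.comap_map_eq (QuotientGroup.mk' N) (U'.map M.subtype)
    rw [hmap, QuotientGroup.ker_mk', Subgroup.comap_top] at h2
    exact h2.symm
  · -- Case b : no proper supplement
    push_neg at hA
    have hb : ∀ M : Subgroup G, M ⊔ N = ⊤ → M = ⊤ := by
      intro M hM
      by_contra hne
      exact hA M hne hM
    by_cases hN1 : N = ⊥
    · subst hN1
      have hXG : X G := xIso hXc (QuotientGroup.quotientBot (G := G)) hXQ
      exact ⟨⊤, xIso hXc Subgroup.topEquiv.symm hXG, top_sup_eq _⟩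
    · have hcN : Nat.card ↥N ≠ 1 := by
        simpa [Subgroup.card_eq_one] using hN1
      obtain ⟨p, hp, hpN⟩ := Nat.exists_prime_and_dvd hcN
      haveI : Fact p.Prime := ⟨hp⟩
      obtain ⟨P⟩ : Nonempty (Sylow p ↥N) := inferInstance
      set P' := (P : Subgroup ↥N).map N.subtype with hP'def
      have hP'N : P' ≤ N := Subgroup.map_subtype_le _
      have hfr := Sylow.normalizer_sup_eq_top (N := N) P
      have hnt : Subgroup.normalizer (P' : Set G) = ⊤ := hb _ hfr
      haveI hP'normal : P'.Normal := Subgroup.normalizer_eq_top_iff.mp hnt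
      have hP'p : IsPGroup p ↥P' := P.isPGroup'.map N.subtype
      have hpP' : p ∣ Nat.card ↥P' := by
        have hcP : Nat.card ↥P' = Nat.card ↥(P : Subgroup ↥N) :=
          (Nat.card_congr
            (Subgroup.equivMapOfInjective _ N.subtype N.subtype_injective).toEquiv).symm
        have h1 := Subgroup.card_mul_index (P : Subgroup ↥N)
        have h2 := Sylow.not_dvd_index P
        rw [hcP]
        rcases (Nat.Prime.dvd_mul hp).mp (h1 ▸ hpN) with h | h
        · exact h
        · exact absurd h h2
      have hpiN : p ∣ N.index := by
        by_contra hpi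
        obtain ⟨k, hk⟩ := IsPGroup.iff_card.mp hP'p
        have hcop : (Nat.card ↥P').Coprime P'.index := by
          rw [hk]
          apply Nat.Coprime.pow_left
          rw [Nat.Prime.coprime_iff_not_dvd hp]
          intro hdvd
          have h3 := Subgroup.relIndex_mul_index hP'N
          rcases (Nat.Prime.dvd_mul hp).mp (h3 ▸ hdvd) with h | h
          · have h4 : P'.subgroupOf N = (P : Subgroup ↥N) :=
              Subgroup.comap_map_eq_self_of_injective N.subtype_injective _
            have h5 : P'.relIndex N = ((P : Subgroup ↥N)).index := by
              show (P'.subgroupOf N).index = _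
              rw [h4]
            rw [h5] at h
            exact Sylow.not_dvd_index P h
          · exact hpi h
        obtain ⟨Kc, hKc⟩ := Subgroup.exists_right_complement'_of_coprime hcop
        have hKcN : Kc ⊔ N = ⊤ := by
          have h5 := hKc.sup_eq_top
          rw [eq_top_iff, ← h5]
          exact sup_le (hP'N.trans le_sup_right) le_sup_left
        have hKtop := hb _ hKcN
        have hdisj := hKc.disjoint
        rw [hKtop] at hdisj
        have hPbot : P' = ⊥ := disjoint_top.mp hdisj
        rw [hPbot, Subgroup.card_bot] at hpP'
        exact hp.ne_one (Nat.dvd_one.mp hpP')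
      have hXP' : X ↥P' :=
        xPGroup hXc hp hXQ (by rwa [← Subgroup.index_eq_card]) ↥P' hP'p
      have hQlt : Nat.card (G ⧸ P') < n := by
        rw [← hn, Subgroup.card_eq_card_quotient_mul_card_subgroup P']
        have hpos : 0 < Nat.card ↥P' := Nat.card_pos
        have h1 : 1 < Nat.card ↥P' := by
          have := Nat.le_of_dvd hpos hpP'
          have := hp.two_le
          omega
        exact (Nat.lt_mul_iff_one_lt_right Nat.card_pos).mpr h1
      set N' := N.map (QuotientGroup.mk' P') with hN'
      haveI : N'.Normal :=
        Subgroup.Normal.map ‹N.Normal› _ (QuotientGroup.mk'_surjective P')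
      have hXQ' : X ((G ⧸ P') ⧸ N') :=
        xIso hXc (QuotientGroup.quotientQuotientEquivQuotient P' N hP'N).symm hXQ
      obtain ⟨Ub, hUbX, hUb⟩ := ih _ hQlt (G ⧸ P') rfl N' hXQ'
      set V := Ub.comap (QuotientGroup.mk' P') with hV
      have hVN : V ⊔ N = ⊤ := by
        have hmap : (V ⊔ N).map (QuotientGroup.mk' P') = ⊤ := by
          rw [Subgroup.map_sup, hV,
            Subgroup.map_comap_eq_self_of_surjective (QuotientGroup.mk'_surjective P') Ub,
            ← hN', hUb]
        have h6 := Subgroup.comap_map_eq (QuotientGroup.mk' P') (V ⊔ N)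
        rw [hmap, QuotientGroup.ker_mk', Subgroup.comap_top] at h6
        have h7 : (V ⊔ N) ⊔ P' = V ⊔ N := by rw [sup_assoc, sup_of_le_left hP'N]
        rw [h7] at h6
        exact h6.symm
      have hVtop := hb _ hVN
      have hUbtop : Ub = ⊤ := by
        have h8 := Subgroup.map_comap_eq_self_of_surjective
          (QuotientGroup.mk'_surjective P') Ub
        rw [← h8, ← hV, hVtop]
        exact Subgroup.map_top_of_surjective _ (QuotientGroup.mk'_surjective P')
      have hXGP : X (G ⧸ P') := xIso hXc Subgroup.topEquiv (hUbtop ▸ hUbX)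
      have hXG : X G := xExt hXc P' hXP' hXGP
      exact ⟨⊤, xIso hXc Subgroup.topEquiv.symm hXG, top_sup_eq _⟩

end Supp

section Lift

variable {X : GroupClass}

lemma exists_xmax (hXc : IsCompleteClass X) {G : Type} [Group G] [Finite G]
    {U : Subgroup G} (hU : X ↥U) : ∃ H : Subgroup G, IsXMaximal X H ∧ U ≤ H := by
  obtain ⟨H, ⟨hHX, hUH⟩, hmax⟩ :=
    Set.Finite.exists_maximalFor id {V : Subgroup G | X ↥V ∧ U ≤ V}
      (Set.toFinite _) ⟨U, hU, le_rfl⟩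
  exact ⟨H, ⟨hHX, fun K hK hle => le_antisymm hle (hmax ⟨hK, hUH.trans hle⟩ hle)⟩, hUH⟩

lemma xmax_lift (hXc : IsCompleteClass X) {G : Type} [Group G] [Finite G]
    (N : Subgroup G) [N.Normal] {K : Subgroup (G ⧸ N)} (hK : IsXMaximal X K) :
    ∃ H : Subgroup G, IsXMaximal X H ∧ H.map (QuotientGroup.mk' N) = K := by
  set π := QuotientGroup.mk' N with hπdef
  set Kb := K.comap π with hKb
  set ψ := π.comp Kb.subtype with hψ
  have hrange : ψ.range = Kb.map π := by
    rw [hψ, MonoidHom.range_comp, Subgroup.range_subtype]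
  have hrangeK : Kb.map π = K :=
    Subgroup.map_comap_eq_self_of_surjective (QuotientGroup.mk'_surjective N) K
  have hXrange : X ↥ψ.range := by
    rw [hrange, hrangeK]; exact hK.1
  have hXq : X (↥Kb ⧸ ψ.ker) :=
    xIso hXc (QuotientGroup.quotientKerEquivRange ψ).symm hXrange
  obtain ⟨U, hUX, hUsup⟩ := xSupp hXc _ ↥Kb rfl ψ.ker hXq
  set U' := U.map Kb.subtype with hU'
  have hU'X : X ↥U' :=
    xIso hXc (Subgroup.equivMapOfInjective U Kb.subtype Kb.subtype_injective) hUX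
  obtain ⟨H, ⟨hHX, hUH, hHKb⟩, hmax⟩ :=
    Set.Finite.exists_maximalFor id {V : Subgroup G | X ↥V ∧ U' ≤ V ∧ V ≤ Kb}
      (Set.toFinite _) ⟨U', hU'X, le_rfl, Subgroup.map_subtype_le U⟩
  have hkmap : ψ.ker.map ψ = ⊥ := by
    rw [eq_bot_iff]
    rintro x ⟨y, hy, rfl⟩
    simpa [Subgroup.mem_bot] using hy
  have hUψ : U.map ψ = K := by
    have h1 : (U ⊔ ψ.ker).map ψ = Subgroup.map ψ ⊤ := by rw [hUsup]
    rw [Subgroup.map_sup, hkmap, sup_bot_eq, ← MonoidHom.range_eq_map, hrange, hrangeK]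
      at h1
    exact h1
  have hU'K : U'.map π = K := by
    rw [hU', Subgroup.map_map, ← hψ, hUψ]
  have hmapH : H.map π = K := by
    apply le_antisymm
    · calc H.map π ≤ Kb.map π := Subgroup.map_mono hHKb
        _ = K := hrangeK
    · rw [← hU'K]
      exact Subgroup.map_mono hUH
  refine ⟨H, ⟨hHX, ?_⟩, hmapH⟩
  intro K' hK'X hHK'
  have hmK' : X ↥(K'.map π) := xMap hXc π K' hK'X
  have hKle : K ≤ K'.map π := by rw [← hmapH]; exact Subgroup.map_mono hHK'
  have hKeq : K = K'.map π := hK.2 _ hmK' hKle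
  have hK'le : K' ≤ Kb := by
    calc K' ≤ K' ⊔ π.ker := le_sup_left
      _ = Kb := by rw [← Subgroup.comap_map_eq π K', ← hKeq]
  exact le_antisymm hHK' (hmax ⟨hK'X, hUH.trans hHK', hK'le⟩ hHK')

end Lift

def classesOf {G : Type} [Group G] (S : Set (Subgroup G)) : Set (Set (Subgroup G)) :=
  {C | ∃ H ∈ S, C = orbitS H}

lemma numClasses_eq_card {G : Type} [Group G] (S : Set (Subgroup G)) :
    numClasses S = Nat.card ↥(classesOf S) := rfl

lemma orbitS_map_eq {G Q : Type} [Group G] [Group Q] (π : G →* Q) {H H' : Subgroup G}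
    (he : orbitS H = orbitS H') : orbitS (H.map π) = orbitS (H'.map π) := by
  have hmem : H' ∈ orbitS H := by rw [he]; exact mem_orbitS_self H'
  obtain ⟨g, rfl⟩ := hmem
  rw [conjSub_map, orbitS_conj]

noncomputable def classMap {G Q : Type} [Group G] [Group Q] (π : G →* Q)
    (S : Set (Subgroup G)) (T : Set (Subgroup Q)) (hST : ∀ H ∈ S, H.map π ∈ T) :
    ↥(classesOf S) → ↥(classesOf T) :=
  fun C => ⟨orbitS ((C.2.choose).map π), ⟨_, hST _ C.2.choose_spec.1, rfl⟩⟩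

lemma classMap_eq {G Q : Type} [Group G] [Group Q] (π : G →* Q)
    (S : Set (Subgroup G)) (T : Set (Subgroup Q)) (hST : ∀ H ∈ S, H.map π ∈ T)
    (C : ↥(classesOf S)) (H : Subgroup G) (hC : (C : Set (Subgroup G)) = orbitS H) :
    (classMap π S T hST C : Set (Subgroup Q)) = orbitS (H.map π) := by
  have hspec := C.2.choose_spec.2
  exact orbitS_map_eq π (hspec.symm.trans hC).symm |>.symm ▸ rfl

/-- If `k_𝔛(G) = k_𝔛(G/N)` then: (1) images of `𝔛`-maximal subgroups of `G` are `𝔛`-maximal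
in `G/N`; (2) every `𝔛`-maximal subgroup of `G/N` is such an image; (3) two `𝔛`-maximal
subgroups of `G` are conjugate in `G` iff their images are conjugate in `G/N` (so
`H ↦ HN/N` induces a bijection between the conjugacy classes of `𝔛`-maximal subgroups). -/
theorem kX_quotient_eq_natural_bijection (X : GroupClass) (hXc : IsCompleteClass X)
    (G : Type) [Group G] [Finite G] (N : Subgroup G) [N.Normal]
    (h : kX X G = kX X (G ⧸ N)) :
    (∀ H : Subgroup G, IsXMaximal X H → IsXMaximal X (H.map (QuotientGroup.mk' N))) ∧
    (∀ K : Subgroup (G ⧸ N), IsXMaximal X K →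
      ∃ H : Subgroup G, IsXMaximal X H ∧ K = H.map (QuotientGroup.mk' N)) ∧
    (∀ H L : Subgroup G, IsXMaximal X H → IsXMaximal X L →
      ((∃ g : G, conjSub g H = L) ↔
        ∃ q : G ⧸ N, conjSub q (H.map (QuotientGroup.mk' N)) = L.map (QuotientGroup.mk' N))) := by
  classical
  let π := QuotientGroup.mk' N
  have lift : ∀ K : Subgroup (G ⧸ N), IsXMaximal X K →
      ∃ H, IsXMaximal X H ∧ H.map π = K := fun K hK => xmax_lift hXc N hK
  have hST : ∀ H ∈ {H : Subgroup G | IsXMaximal X H ∧ IsXMaximal X (H.map π)},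
      H.map π ∈ {K : Subgroup (G ⧸ N) | IsXMaximal X K} := fun H hH => hH.2
  let f := classMap π _ _ hST
  have hCSsubCM : classesOf {H : Subgroup G | IsXMaximal X H ∧ IsXMaximal X (H.map π)}
      ⊆ classesOf {H : Subgroup G | IsXMaximal X H} := by
    rintro C ⟨H, hHS, rfl⟩
    exact ⟨H, hHS.1, rfl⟩
  have hfsurj : Function.Surjective f := by
    rintro ⟨D, K, hK, rfl⟩
    obtain ⟨H, hH, hHmap⟩ := lift K hK
    have hHS : H ∈ {H : Subgroup G | IsXMaximal X H ∧ IsXMaximal X (H.map π)} :=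
      ⟨hH, by rw [hHmap]; exact hK⟩
    refine ⟨⟨orbitS H, H, hHS, rfl⟩, ?_⟩
    apply Subtype.ext
    rw [classMap_eq π _ _ hST ⟨orbitS H, H, hHS, rfl⟩ H rfl, hHmap]
  have hle1 : Nat.card ↥(classesOf {K : Subgroup (G ⧸ N) | IsXMaximal X K}) ≤
      Nat.card ↥(classesOf {H : Subgroup G | IsXMaximal X H ∧ IsXMaximal X (H.map π)}) :=
    Nat.card_le_card_of_surjective f hfsurj
  have hle2 : Nat.card ↥(classesOf {H : Subgroup G | IsXMaximal X H ∧ IsXMaximal X (H.map π)})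
      ≤ Nat.card ↥(classesOf {H : Subgroup G | IsXMaximal X H}) := by
    rw [Nat.card_coe_set_eq, Nat.card_coe_set_eq]
    exact Set.ncard_le_ncard hCSsubCM (Set.toFinite _)
  have hMN : Nat.card ↥(classesOf {H : Subgroup G | IsXMaximal X H}) =
      Nat.card ↥(classesOf {K : Subgroup (G ⧸ N) | IsXMaximal X K}) := h
  have hSM : Nat.card ↥(classesOf {H : Subgroup G | IsXMaximal X H ∧ IsXMaximal X (H.map π)})
      = Nat.card ↥(classesOf {H : Subgroup G | IsXMaximal X H}) := le_antisymm hle2 (by omega)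
  have hCSeq : classesOf {H : Subgroup G | IsXMaximal X H ∧ IsXMaximal X (H.map π)}
      = classesOf {H : Subgroup G | IsXMaximal X H} := by
    apply Set.eq_of_subset_of_ncard_le hCSsubCM
    rw [← Nat.card_coe_set_eq, ← Nat.card_coe_set_eq, hSM]
  have stmt1 : ∀ H : Subgroup G, IsXMaximal X H → IsXMaximal X (H.map π) := by
    intro H hH
    have hC : orbitS H ∈ classesOf {H : Subgroup G | IsXMaximal X H} := ⟨H, hH, rfl⟩
    rw [← hCSeq] at hC
    obtain ⟨H', hH'S, hOrb⟩ := hC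
    have hmem : H ∈ orbitS H' := by rw [← hOrb]; exact mem_orbitS_self H
    obtain ⟨g, rfl⟩ := hmem
    rw [conjSub_map]
    exact xmax_conj hXc _ hH'S.2
  refine ⟨stmt1, fun K hK => ?_, fun H L hH hL => ?_⟩
  · obtain ⟨H, h1, h2⟩ := lift K hK
    exact ⟨H, h1, h2.symm⟩
  · constructor
    · rintro ⟨g, rfl⟩
      exact ⟨π g, (conjSub_map π g H).symm⟩
    · rintro ⟨q, hq⟩
      have hfinj : Function.Injective f := by
        have hbij := (Nat.bijective_iff_surjective_and_card f).mpr ⟨hfsurj, by omega⟩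
        exact hbij.1
      have hCH : orbitS H ∈ classesOf
          {H : Subgroup G | IsXMaximal X H ∧ IsXMaximal X (H.map π)} :=
        ⟨H, ⟨hH, stmt1 H hH⟩, rfl⟩
      have hCL : orbitS L ∈ classesOf
          {H : Subgroup G | IsXMaximal X H ∧ IsXMaximal X (H.map π)} :=
        ⟨L, ⟨hL, stmt1 L hL⟩, rfl⟩
      have hfHL : f ⟨orbitS H, hCH⟩ = f ⟨orbitS L, hCL⟩ := by
        apply Subtype.ext
        rw [classMap_eq π _ _ hST ⟨orbitS H, hCH⟩ H rfl,
          classMap_eq π _ _ hST ⟨orbitS L, hCL⟩ L rfl, ← hq, orbitS_conj]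
      have heq := hfinj hfHL
      have hOrbHL : orbitS H = orbitS L := congrArg Subtype.val heq
      have hmem : L ∈ orbitS H := by rw [hOrbHL]; exact mem_orbitS_self L
      obtain ⟨g, hg⟩ := hmem
      exact ⟨g, hg.symm⟩
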